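/- Let G be a finite simple graph whose vertex set is partitioned into k cliques V_1,…,V_k, and let G'_5 be the associated constructed graph with A = 5. Then G has an independent set of size at least k if and only if G'_5 has a minimal dominating set of size at least 5k. -/
import Mathlib

def Dominates {V : Type*} (G : SimpleGraph V) (D : Set V) : Prop :=
  ∀ v : V, v ∈ D ∨ ∃ u ∈ D, G.Adj u v

def MinimalDominatingSet {V : Type*} (G : SimpleGraph V) (D : Set V) : Prop :=
  Dominates G D ∧ ∀ D' : Set V, D' ⊂ D → ¬ Dominates G D'

def IndepSet {V : Type*} (G : SimpleGraph V) (I : Set V) : Prop :=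
  ∀ u ∈ I, ∀ v ∈ I, ¬ G.Adj u v

def primeGraph {V : Type*} {k : ℕ} (G : SimpleGraph V) (c : V → Fin k) (A : ℕ) :
    SimpleGraph ((V × Fin A) ⊕ Fin k) :=
  SimpleGraph.fromRel fun x y =>
    match x, y with
    | Sum.inl (u, _), Sum.inl (v, _) => G.Adj u v
    | Sum.inl (u, _), Sum.inr i => c u = i
    | _, _ => False

section aux
variable {V : Type*} {k : ℕ} {G : SimpleGraph V} {c : V → Fin k}

lemma pg_adj_inl_inl {u v : V} {a b : Fin 5} :
    (primeGraph G c 5).Adj (Sum.inl (u,a)) (Sum.inl (v,b)) ↔ G.Adj u v := by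
  simp only [primeGraph, SimpleGraph.fromRel_adj]
  constructor
  · rintro ⟨-, h | h⟩
    · exact h
    · exact h.symm
  · intro h
    refine ⟨?_, Or.inl h⟩
    simp only [ne_eq, Sum.inl.injEq, Prod.mk.injEq, not_and]
    intro he; exact absurd (he ▸ h) (G.irrefl)

lemma pg_adj_inl_inr {u : V} {a : Fin 5} {i : Fin k} :
    (primeGraph G c 5).Adj (Sum.inl (u,a)) (Sum.inr i) ↔ c u = i := by
  simp only [primeGraph, SimpleGraph.fromRel_adj]
  constructor
  · rintro ⟨-, h | h⟩
    · exact h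
    · exact h.elim
  · intro h; exact ⟨by simp, Or.inl h⟩

lemma pg_adj_inr_inl {u : V} {a : Fin 5} {i : Fin k} :
    (primeGraph G c 5).Adj (Sum.inr i) (Sum.inl (u,a)) ↔ c u = i := by
  rw [SimpleGraph.adj_comm]; exact pg_adj_inl_inr

lemma pg_not_adj_inr_inr {i j : Fin k} :
    ¬ (primeGraph G c 5).Adj (Sum.inr i) (Sum.inr j) := by
  simp only [primeGraph, SimpleGraph.fromRel_adj]
  rintro ⟨-, h | h⟩ <;> exact h

/-- adjacency to a pair only depends on the base vertex -/
lemma pg_adj_copy {e : (V × Fin 5) ⊕ Fin k} {v : V} {b b' : Fin 5}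
    (h : (primeGraph G c 5).Adj e (Sum.inl (v,b))) :
    (primeGraph G c 5).Adj e (Sum.inl (v,b')) := by
  obtain (⟨x, a⟩ | j) := e
  · exact pg_adj_inl_inl.mpr (pg_adj_inl_inl.mp h)
  · exact pg_adj_inr_inl.mpr (pg_adj_inr_inl.mp h)

lemma exists_private {W : Type*} {Gp : SimpleGraph W} {D : Set W}
    (hD : MinimalDominatingSet Gp D) {d : W} (hd : d ∈ D) :
    ∃ x, (x = d ∨ Gp.Adj d x) ∧ ∀ e ∈ D, (e = x ∨ Gp.Adj e x) → e = d := by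
  have hss : D \ {d} ⊂ D := Set.sdiff_singleton_ssubset.mpr hd
  have hnd := hD.2 _ hss
  rw [Dominates] at hnd; push_neg at hnd
  obtain ⟨x, hx1, hx2⟩ := hnd
  have hxD : x ∈ D → x = d := by
    intro hxd
    by_contra hne
    exact hx1 ⟨hxd, hne⟩
  refine ⟨x, ?_, ?_⟩
  · rcases hD.1 x with h | ⟨e, he, hadj⟩
    · exact Or.inl (hxD h)
    · by_cases hed : e = d
      · exact Or.inr (hed ▸ hadj)
      · exact absurd hadj (hx2 e ⟨he, hed⟩)
  · rintro e he (rfl | hadj)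
    · exact hxD he
    · by_contra hed
      exact hx2 e ⟨he, hed⟩ hadj

end aux

theorem stmt7 {V : Type*} [Fintype V] (G : SimpleGraph V) (k : ℕ) (c : V → Fin k)
    (hclique : ∀ u v : V, u ≠ v → c u = c v → G.Adj u v)
    (hsurj : Function.Surjective c) :
    (∃ I : Set V, IndepSet G I ∧ k ≤ I.ncard) ↔
      ∃ D : Set ((V × Fin 5) ⊕ Fin k),
        MinimalDominatingSet (primeGraph G c 5) D ∧ 5 * k ≤ D.ncard := by
  classical
  constructor
  · -- forward direction
    rintro ⟨I, hI, hIk⟩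
    have hinj : Set.InjOn c I := by
      intro u hu v hv huv
      by_contra hne
      exact hI u hu v hv (hclique u v hne huv)
    have hIle : I.ncard ≤ k := by
      have h1 : (c '' I).ncard = I.ncard := Set.ncard_image_of_injOn hinj
      have h2 : (c '' I).ncard ≤ (Set.univ : Set (Fin k)).ncard :=
        Set.ncard_le_ncard (Set.subset_univ _) Set.finite_univ
      rwa [h1, Set.ncard_univ, Nat.card_eq_fintype_card, Fintype.card_fin] at h2
    have hIeq : I.ncard = k := le_antisymm hIle hIk
    have himg : c '' I = Set.univ :=
      Set.eq_of_subset_of_ncard_le (Set.subset_univ _)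
        (by rw [Set.ncard_univ, Nat.card_eq_fintype_card, Fintype.card_fin,
          Set.ncard_image_of_injOn hinj, hIeq])
    have hrep : ∀ i : Fin k, ∃ u ∈ I, c u = i := by
      intro i
      have : i ∈ c '' I := by rw [himg]; trivial
      obtain ⟨u, hu, hcu⟩ := this
      exact ⟨u, hu, hcu⟩
    refine ⟨Sum.inl '' (I ×ˢ (Set.univ : Set (Fin 5))), ⟨?_, ?_⟩, ?_⟩
    · -- dominating
      rintro (⟨v, b⟩ | i)
      · by_cases hv : v ∈ I
        · exact Or.inl ⟨(v, b), ⟨hv, trivial⟩, rfl⟩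
        · obtain ⟨u, hu, hcu⟩ := hrep (c v)
          refine Or.inr ⟨Sum.inl (u, b), ⟨(u,b), ⟨hu, trivial⟩, rfl⟩, ?_⟩
          exact pg_adj_inl_inl.mpr (hclique u v (fun h => hv (h ▸ hu)) hcu)
      · obtain ⟨u, hu, hcu⟩ := hrep i
        exact Or.inr ⟨Sum.inl (u, (0 : Fin 5)), ⟨(u,0), ⟨hu, trivial⟩, rfl⟩,
          pg_adj_inl_inr.mpr hcu⟩
    · -- minimal
      intro D' hss hdom
      obtain ⟨d, hdD, hdD'⟩ := Set.exists_of_ssubset hss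
      obtain ⟨⟨u, a⟩, ⟨hu, -⟩, rfl⟩ := hdD
      rcases hdom (Sum.inl (u, a)) with h | ⟨e, he, hadj⟩
      · exact hdD' h
      · obtain ⟨⟨v, b⟩, ⟨hv, -⟩, rfl⟩ := hss.1 he
        exact hI v hv u hu (pg_adj_inl_inl.mp hadj)
    · -- cardinality
      rw [Set.ncard_image_of_injective _ Sum.inl_injective]
      have : (I ×ˢ (Set.univ : Set (Fin 5))).ncard = I.ncard * 5 := by
        rw [Set.ncard_eq_toFinset_card', Set.toFinset_prod, Finset.card_product,
          Set.toFinset_univ, Finset.card_univ, Fintype.card_fin,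
          ← Set.ncard_eq_toFinset_card']
      rw [this, hIeq, mul_comm]
  · -- backward direction
    rintro ⟨D, hD, hcard⟩
    set Gp := primeGraph G c 5 with hGp
    -- choose private neighbors
    have hw0 : ∀ d : (V × Fin 5) ⊕ Fin k, ∃ x, d ∈ D →
        ((x = d ∨ Gp.Adj d x) ∧ ∀ e ∈ D, (e = x ∨ Gp.Adj e x) → e = d) := by
      intro d
      by_cases hd : d ∈ D
      · obtain ⟨x, hx⟩ := exists_private hD hd
        exact ⟨x, fun _ => hx⟩
      · exact ⟨d, fun h => absurd h hd⟩
    choose w hw using hw0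
    have hw1 : ∀ d ∈ D, w d = d ∨ Gp.Adj d (w d) := fun d hd => (hw d hd).1
    have hw2 : ∀ d ∈ D, ∀ e ∈ D, (e = w d ∨ Gp.Adj e (w d)) → e = d :=
      fun d hd => (hw d hd).2
    have winj : ∀ d₁ ∈ D, ∀ d₂ ∈ D, w d₁ = w d₂ → d₁ = d₂ := by
      intro d₁ h₁ d₂ h₂ heq
      apply hw2 d₂ h₂ d₁ h₁
      rcases hw1 d₁ h₁ with h | h
      · exact Or.inl (heq ▸ h.symm)
      · exact Or.inr (heq ▸ h)
    -- self-private pairs give full vertices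
    have hself : ∀ (u : V) (a : Fin 5), Sum.inl (u,a) ∈ D →
        w (Sum.inl (u,a)) = Sum.inl (u,a) → ∀ b, Sum.inl (u,b) ∈ D := by
      intro u a hd hwd b
      have hnoadj : ∀ e ∈ D, ¬ Gp.Adj e (Sum.inl (u,a)) := by
        intro e he hadj
        have heq := hw2 _ hd e he (Or.inr (by rw [hwd]; exact hadj))
        rw [heq] at hadj
        exact Gp.irrefl hadj
      rcases hD.1 (Sum.inl (u,b)) with h | ⟨e, he, hadj⟩
      · exact h
      · exact absurd (pg_adj_copy hadj) (hnoadj e he)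
    -- finset bookkeeping
    have hDfin : D.Finite := Set.toFinite D
    set Dfin : Finset ((V × Fin 5) ⊕ Fin k) := hDfin.toFinset with hDfin_def
    set κ : (V × Fin 5) ⊕ Fin k → Fin k := Sum.elim (fun p => c p.1) id with hκ_def
    set Tf : Fin k → Finset ((V × Fin 5) ⊕ Fin k) :=
      fun i => Dfin.filter (fun d => κ (w d) = i) with hTf_def
    have hTmem : ∀ (d : (V × Fin 5) ⊕ Fin k) (i : Fin k),
        d ∈ Tf i ↔ d ∈ D ∧ κ (w d) = i := by
      intro d i
      rw [hTf_def]
      simp only [Finset.mem_filter, Set.Finite.mem_toFinset, hDfin_def]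
    have hsum : Dfin.card = ∑ i : Fin k, (Tf i).card :=
      Finset.card_eq_sum_card_fiberwise (fun x _ => Finset.mem_univ (κ (w x)))
    -- cliques with a full vertex have fiber ≤ 5
    have L1 : ∀ (i : Fin k) (u : V), c u = i → (∀ b, Sum.inl (u,b) ∈ D) →
        (Tf i).card ≤ 5 := by
      intro i u hcu hfullu
      have h01 : Sum.inl (u, (0:Fin 5)) ≠ (Sum.inl (u, (1:Fin 5)) : (V × Fin 5) ⊕ Fin k) := by
        simp
      have key : ∀ d ∈ Tf i, ∃ b : Fin 5, w d = Sum.inl (u, b) := by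
        intro d hd
        obtain ⟨hdD, hκd⟩ := (hTmem d i).1 hd
        rcases hwd : w d with (⟨v, b⟩ | j)
        · by_cases hvu : v = u
          · subst hvu; exact ⟨b, rfl⟩
          · exfalso
            have hcv : c v = i := by rw [hwd] at hκd; simpa [hκ_def] using hκd
            have hadjuv : G.Adj u v := hclique u v (Ne.symm hvu) (hcu.trans hcv.symm)
            have e0 := hw2 d hdD _ (hfullu 0)
              (Or.inr (by rw [hwd]; exact pg_adj_inl_inl.mpr hadjuv))
            have e1 := hw2 d hdD _ (hfullu 1)
              (Or.inr (by rw [hwd]; exact pg_adj_inl_inl.mpr hadjuv))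
            exact h01 (e0.trans e1.symm)
        · exfalso
          have hji : j = i := by rw [hwd] at hκd; simpa [hκ_def] using hκd
          have e0 := hw2 d hdD _ (hfullu 0)
            (Or.inr (by rw [hwd, hji]; exact pg_adj_inl_inr.mpr hcu))
          have e1 := hw2 d hdD _ (hfullu 1)
            (Or.inr (by rw [hwd, hji]; exact pg_adj_inl_inr.mpr hcu))
          exact h01 (e0.trans e1.symm)
      have hinjZ : Function.Injective (fun b : Fin 5 => (Sum.inl (u, b) : (V × Fin 5) ⊕ Fin k)) := by
        intro a b h; simpa using h
      calc (Tf i).card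
          ≤ (Finset.univ.image (fun b : Fin 5 => (Sum.inl (u, b) : (V × Fin 5) ⊕ Fin k))).card := by
            apply Finset.card_le_card_of_injOn w
            · intro d hd
              obtain ⟨b, hb⟩ := key d hd
              rw [hb]
              exact Finset.mem_image.mpr ⟨b, Finset.mem_univ _, rfl⟩
            · intro d₁ h₁ d₂ h₂ he
              exact winj d₁ ((hTmem d₁ i).1 h₁).1 d₂ ((hTmem d₂ i).1 h₂).1 he
        _ = 5 := by rw [Finset.card_image_of_injective _ hinjZ, Finset.card_univ,
            Fintype.card_fin]
    -- cliques without a full vertex have fiber ≤ 4 (in fact ≤ 3)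
    have L2 : ∀ i : Fin k, (∀ u, c u = i → ∃ b, Sum.inl (u,b) ∉ D) →
        (Tf i).card ≤ 4 := by
      intro i hnofull
      by_cases hz : Sum.inr i ∈ D ∧ w (Sum.inr i) = Sum.inr i
      · -- then Tf i ⊆ {inr i}
        have hsub : Tf i ⊆ {Sum.inr i} := by
          intro d hd
          obtain ⟨hdD, hκd⟩ := (hTmem d i).1 hd
          rcases hwd : w d with (⟨v, b⟩ | j)
          · exfalso
            have hcv : c v = i := by rw [hwd] at hκd; simpa [hκ_def] using hκd
            have heq : Sum.inr i = d := hw2 d hdD _ hz.1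
              (Or.inr (by rw [hwd]; exact pg_adj_inr_inl.mpr hcv))
            rw [← heq, hz.2] at hwd
            exact (by simp : (Sum.inr i : (V × Fin 5) ⊕ Fin k) ≠ Sum.inl (v,b)) hwd
          · have hji : j = i := by rw [hwd] at hκd; simpa [hκ_def] using hκd
            have heq : Sum.inr i = d := hw2 d hdD _ hz.1 (Or.inl (by rw [hwd, hji]))
            simp [← heq]
        calc (Tf i).card ≤ ({Sum.inr i} : Finset ((V × Fin 5) ⊕ Fin k)).card :=
              Finset.card_le_card hsub
          _ ≤ 4 := by simp
      · -- no self-private element in Tf i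
        have hns : ∀ d ∈ Tf i, w d ≠ d := by
          intro d hd hwd
          obtain ⟨hdD, hκd⟩ := (hTmem d i).1 hd
          obtain (⟨u, a⟩ | j) := d
          · have hcu : c u = i := by rw [hwd] at hκd; simpa [hκ_def] using hκd
            obtain ⟨b, hb⟩ := hnofull u hcu
            exact hb (hself u a hdD hwd b)
          · have hji : j = i := by rw [hwd] at hκd; simpa [hκ_def] using hκd
            subst hji
            exact hz ⟨hdD, hwd⟩
        have hadjw : ∀ d ∈ Tf i, Gp.Adj d (w d) := by
          intro d hd
          rcases hw1 d ((hTmem d i).1 hd).1 with h | h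
          · exact absurd h (hns d hd)
          · exact h
        -- at most one private per base vertex
        have hbase : ∀ d₁ ∈ Tf i, ∀ d₂ ∈ Tf i, ∀ (v : V) (b₁ b₂ : Fin 5),
            w d₁ = Sum.inl (v, b₁) → w d₂ = Sum.inl (v, b₂) → d₁ = d₂ := by
          intro d₁ h₁ d₂ h₂ v b₁ b₂ hw₁ hw₂
          have hD₁ := ((hTmem d₁ i).1 h₁).1
          have hD₂ := ((hTmem d₂ i).1 h₂).1
          have hadj₂ : Gp.Adj d₂ (Sum.inl (v, b₁)) := by
            apply pg_adj_copy (b := b₂)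
            have := hadjw d₂ h₂
            rwa [hw₂] at this
          exact (hw2 d₁ hD₁ d₂ hD₂ (Or.inr (by rw [hw₁]; exact hadj₂))).symm ▸ rfl
        -- now bound the cardinality
        by_contra hc4
        push_neg at hc4
        set Tz := (Tf i).filter (fun d => w d = Sum.inr i) with hTz_def
        set Tp := (Tf i).filter (fun d => ¬ w d = Sum.inr i) with hTp_def
        have hsplit : Tz.card + Tp.card = (Tf i).card :=
          Finset.card_filter_add_card_filter_not _
        have hTzle : Tz.card ≤ 1 := by
          refine Finset.card_le_one.mpr ?_
          intro a ha b hb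
          rw [hTz_def, Finset.mem_filter] at ha hb
          exact winj a ((hTmem a i).1 ha.1).1 b ((hTmem b i).1 hb.1).1
            (ha.2.trans hb.2.symm)
        have hTp3 : 3 ≤ Tp.card := by omega
        obtain ⟨t, hts, ht3⟩ := Finset.exists_subset_card_eq hTp3
        obtain ⟨d₁, d₂, d₃, h12, h13, h23, rfl⟩ := Finset.card_eq_three.mp ht3
        have hmem : ∀ d ∈ ({d₁, d₂, d₃} : Finset ((V × Fin 5) ⊕ Fin k)),
            d ∈ Tf i ∧ d ∈ D ∧ w d ≠ Sum.inr i := by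
          intro d hd
          have h := hts hd
          rw [hTp_def, Finset.mem_filter] at h
          exact ⟨h.1, ((hTmem d i).1 h.1).1, h.2⟩
        have hform : ∀ d ∈ ({d₁, d₂, d₃} : Finset ((V × Fin 5) ⊕ Fin k)),
            ∃ v b, w d = Sum.inl (v, b) ∧ c v = i := by
          intro d hd
          obtain ⟨hdT, hdD, hdz⟩ := hmem d hd
          have hκd := ((hTmem d i).1 hdT).2
          rcases hwd : w d with (⟨v, b⟩ | j)
          · refine ⟨v, b, rfl, ?_⟩
            rw [hwd] at hκd; simpa [hκ_def] using hκd
          · exfalso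
            have hji : j = i := by rw [hwd] at hκd; simpa [hκ_def] using hκd
            rw [hji] at hwd
            exact hdz hwd
        obtain ⟨v₁, b₁, hwd₁, hcv₁⟩ := hform d₁ (by simp)
        obtain ⟨v₂, b₂, hwd₂, hcv₂⟩ := hform d₂ (by simp)
        obtain ⟨v₃, b₃, hwd₃, hcv₃⟩ := hform d₃ (by simp)
        have hd₁T := (hmem d₁ (by simp)).1
        have hd₂T := (hmem d₂ (by simp)).1
        have hd₃T := (hmem d₃ (by simp)).1
        have hd₁D := (hmem d₁ (by simp)).2.1
        have hd₂D := (hmem d₂ (by simp)).2.1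
        have hd₃D := (hmem d₃ (by simp)).2.1
        have hadj₁ : Gp.Adj d₁ (Sum.inl (v₁, b₁)) := by rw [← hwd₁]; exact hadjw d₁ hd₁T
        have hadj₂ : Gp.Adj d₂ (Sum.inl (v₂, b₂)) := by rw [← hwd₂]; exact hadjw d₂ hd₂T
        have hadj₃ : Gp.Adj d₃ (Sum.inl (v₃, b₃)) := by rw [← hwd₃]; exact hadjw d₃ hd₃T
        have hv12 : v₁ ≠ v₂ := by
          intro h
          exact h12 (hbase d₁ hd₁T d₂ hd₂T v₁ b₁ b₂ hwd₁ (by rw [hwd₂, h]))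
        have hv13 : v₁ ≠ v₃ := by
          intro h
          exact h13 (hbase d₁ hd₁T d₃ hd₃T v₁ b₁ b₃ hwd₁ (by rw [hwd₃, h]))
        have hv23 : v₂ ≠ v₃ := by
          intro h
          exact h23 (hbase d₂ hd₂T d₃ hd₃T v₂ b₂ b₃ hwd₂ (by rw [hwd₃, h]))
        have hstep : ∀ d ∈ ({d₁,d₂,d₃} : Finset ((V × Fin 5) ⊕ Fin k)),
            ∀ d' ∈ ({d₁,d₂,d₃} : Finset ((V × Fin 5) ⊕ Fin k)), d ≠ d' →
            ∀ (v' : V) (b' : Fin 5), w d' = Sum.inl (v', b') →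
            ¬ Gp.Adj d (Sum.inl (v', b')) := by
          intro d hd d' hd' hne v' b' hwd' hadj
          exact hne (hw2 d' (hmem d' hd').2.1 d (hmem d hd).2.1
            (Or.inr (by rw [hwd']; exact hadj)))
        -- each dₘ is of the form inl (xₘ, eₘ)
        have hnotr : ∀ d ∈ ({d₁,d₂,d₃} : Finset ((V × Fin 5) ⊕ Fin k)),
            ∀ (v : V) (b : Fin 5), w d = Sum.inl (v, b) → c v = i →
            ∀ d' ∈ ({d₁,d₂,d₃} : Finset ((V × Fin 5) ⊕ Fin k)), d ≠ d' →
            ∀ (v' : V) (b' : Fin 5), w d' = Sum.inl (v', b') → c v' = i →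
            ∃ x e, d = Sum.inl (x, e) ∧ G.Adj x v := by
          intro d hd v b hwd hcv d' hd' hne v' b' hwd' hcv'
          have hadjd : Gp.Adj d (Sum.inl (v, b)) := by
            rw [← hwd]; exact hadjw d (hmem d hd).1
          rcases hdeq : d with (⟨x, e⟩ | j)
          · rw [hdeq] at hadjd
            exact ⟨x, e, rfl, pg_adj_inl_inl.mp hadjd⟩
          · exfalso
            rw [hdeq] at hadjd
            have hji : j = i := by rw [← pg_adj_inr_inl.mp hadjd]; exact hcv
            refine hstep d hd d' hd' hne v' b' hwd' ?_
            rw [hdeq, hji]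
            exact pg_adj_inr_inl.mpr hcv'
        obtain ⟨x₁, e₁, hd₁eq, hGadj₁⟩ :=
          hnotr d₁ (by simp) v₁ b₁ hwd₁ hcv₁ d₂ (by simp) h12 v₂ b₂ hwd₂ hcv₂
        obtain ⟨x₂, e₂, hd₂eq, hGadj₂⟩ :=
          hnotr d₂ (by simp) v₂ b₂ hwd₂ hcv₂ d₁ (by simp) (Ne.symm h12) v₁ b₁ hwd₁ hcv₁
        -- bases x₁, x₂ are not in clique i
        have hnadj : ∀ d ∈ ({d₁,d₂,d₃} : Finset ((V × Fin 5) ⊕ Fin k)),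
            ∀ (x : V) (e : Fin 5), d = Sum.inl (x, e) →
            ∀ d' ∈ ({d₁,d₂,d₃} : Finset ((V × Fin 5) ⊕ Fin k)), d ≠ d' →
            ∀ (v' : V) (b' : Fin 5), w d' = Sum.inl (v', b') → ¬ G.Adj x v' := by
          intro d hd x e hdeq d' hd' hne v' b' hwd' hGa
          refine hstep d hd d' hd' hne v' b' hwd' ?_
          rw [hdeq]
          exact pg_adj_inl_inl.mpr hGa
        have hcx₁ : c x₁ ≠ i := by
          intro hcx
          have h2 : x₁ = v₂ := by
            by_contra hne
            exact hnadj d₁ (by simp) x₁ e₁ hd₁eq d₂ (by simp) h12 v₂ b₂ hwd₂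
              (hclique x₁ v₂ hne (hcx.trans hcv₂.symm))
          have h3 : x₁ = v₃ := by
            by_contra hne
            exact hnadj d₁ (by simp) x₁ e₁ hd₁eq d₃ (by simp) h13 v₃ b₃ hwd₃
              (hclique x₁ v₃ hne (hcx.trans hcv₃.symm))
          exact hv23 (h2 ▸ h3)
        have hcx₂ : c x₂ ≠ i := by
          intro hcx
          have h1 : x₂ = v₁ := by
            by_contra hne
            exact hnadj d₂ (by simp) x₂ e₂ hd₂eq d₁ (by simp) (Ne.symm h12) v₁ b₁ hwd₁
              (hclique x₂ v₁ hne (hcx.trans hcv₁.symm))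
          have h3 : x₂ = v₃ := by
            by_contra hne
            exact hnadj d₂ (by simp) x₂ e₂ hd₂eq d₃ (by simp) h23 v₃ b₃ hwd₃
              (hclique x₂ v₃ hne (hcx.trans hcv₃.symm))
          exact hv13 (h1 ▸ h3)
        -- z_i is not dominated: contradiction
        have hznotD : Sum.inr i ∉ D := by
          intro hzd
          have heq := hw2 d₁ hd₁D _ hzd
            (Or.inr (by rw [hwd₁]; exact pg_adj_inr_inl.mpr hcv₁))
          rw [hd₁eq] at heq
          exact absurd heq (by simp)
        rcases hD.1 (Sum.inr i) with h | ⟨e, heD, hadj⟩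
        · exact hznotD h
        · rcases e with (⟨y, f⟩ | j)
          · have hcy : c y = i := pg_adj_inl_inr.mp hadj
            by_cases hy1 : y = v₁
            · have hyne : y ≠ v₂ := by rw [hy1]; exact hv12
              have hGa : G.Adj y v₂ := hclique y v₂ hyne (hcy.trans hcv₂.symm)
              have heq := hw2 d₂ hd₂D _ heD
                (Or.inr (by rw [hwd₂]; exact pg_adj_inl_inl.mpr hGa))
              rw [hd₂eq] at heq
              have hyx : y = x₂ := by
                have := Sum.inl.inj heq
                exact (Prod.mk.injEq _ _ _ _ ▸ this).1
              exact hcx₂ (hyx ▸ hcy)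
            · have hGa : G.Adj y v₁ := hclique y v₁ hy1 (hcy.trans hcv₁.symm)
              have heq := hw2 d₁ hd₁D _ heD
                (Or.inr (by rw [hwd₁]; exact pg_adj_inl_inl.mpr hGa))
              rw [hd₁eq] at heq
              have hyx : y = x₁ := by
                have := Sum.inl.inj heq
                exact (Prod.mk.injEq _ _ _ _ ▸ this).1
              exact hcx₁ (hyx ▸ hcy)
          · exact pg_not_adj_inr_inr hadj
    -- every clique contains a full vertex
    have hfull : ∀ i : Fin k, ∃ u, c u = i ∧ ∀ b, Sum.inl (u,b) ∈ D := by
      by_contra hcon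
      push_neg at hcon
      obtain ⟨i₀, hi₀⟩ := hcon
      have hle : ∀ i : Fin k, (Tf i).card ≤ 5 := by
        intro i
        by_cases hfi : ∃ u, c u = i ∧ ∀ b, Sum.inl (u,b) ∈ D
        · obtain ⟨u, hcu, hu⟩ := hfi
          exact L1 i u hcu hu
        · push_neg at hfi
          exact (L2 i hfi).trans (by norm_num)
      have hlt : ∑ i : Fin k, (Tf i).card < ∑ _i : Fin k, 5 :=
        Finset.sum_lt_sum (fun i _ => hle i)
          ⟨i₀, Finset.mem_univ _, lt_of_le_of_lt (L2 i₀ hi₀) (by norm_num)⟩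
      have hDcard : D.ncard = Dfin.card := by
        rw [hDfin_def]; exact Set.ncard_eq_toFinset_card D hDfin
      rw [hDcard, hsum] at hcard
      have h5k : ∑ _i : Fin k, 5 = 5 * k := by
        rw [Finset.sum_const, Finset.card_univ, Fintype.card_fin, smul_eq_mul, mul_comm]
      omega
    choose f hf1 hf2 using hfull
    have hfinj : Function.Injective f := by
      intro i j h
      rw [← hf1 i, ← hf1 j, h]
    refine ⟨Set.range f, ?_, ?_⟩
    · rintro u ⟨i, rfl⟩ v ⟨j, rfl⟩ hadj
      have hd0 : Sum.inl (f i, (0:Fin 5)) ∈ D := hf2 i 0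
      rcases hw1 _ hd0 with hwd | hwd
      · have he : Sum.inl (f j, (0:Fin 5)) ∈ D := hf2 j 0
        have heq := hw2 _ hd0 _ he (Or.inr (by rw [hwd]; exact pg_adj_inl_inl.mpr hadj.symm))
        have hfji : f j = f i := by
          have := Sum.inl.inj heq
          exact (Prod.mk.injEq _ _ _ _ ▸ this).1
        rw [hfji] at hadj
        exact G.irrefl hadj
      · rcases hwde : w (Sum.inl (f i, (0:Fin 5))) with (⟨x, b⟩ | j')
        · rw [hwde] at hwd
          have hx : G.Adj (f i) x := pg_adj_inl_inl.mp hwd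
          have h1 := hw2 _ hd0 _ (hf2 i 1)
            (Or.inr (by rw [hwde]; exact pg_adj_inl_inl.mpr hx))
          simp [Fin.ext_iff] at h1
        · rw [hwde] at hwd
          have hx : c (f i) = j' := pg_adj_inl_inr.mp hwd
          have h1 := hw2 _ hd0 _ (hf2 i 1)
            (Or.inr (by rw [hwde]; exact pg_adj_inl_inr.mpr hx))
          simp [Fin.ext_iff] at h1
    · rw [← Set.image_univ, Set.ncard_image_of_injective _ hfinj, Set.ncard_univ,
        Nat.card_eq_fintype_card, Fintype.card_fin]
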